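/- Let d ≥ 1 and let v : (Fin n → ℝ) → ℝ be d-SOS and nonnegative on nonnegative vectors. Then for every nonnegative vector s : Fin n → ℝ and every coordinate i, v(s) ≤ v( s with its i-th coordinate replaced by 0 ) + d · v( s(i)·e_i ), where s(i)·e_i is the vector whose i-th coordinate is s(i) and all other coordinates are 0. -/
import Mathlib

/-- `v` is a `d`-approximate submodular-over-signals (`d`-SOS) valuation. -/
def dSOS {n : ℕ} (d : ℝ) (v : (Fin n → ℝ) → ℝ) : Prop :=
  ∀ (j : Fin n) (x δ : ℝ), 0 ≤ x → 0 ≤ δ →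
    ∀ t t' : Fin n → ℝ, (∀ l, 0 ≤ t' l) → (∀ l, t' l ≤ t l) →
      d * (v (Function.update t' j (x + δ)) - v (Function.update t' j x)) ≥
        v (Function.update t j (x + δ)) - v (Function.update t j x)

/-- The per-agent welfare decomposition inequality (Equations (2)–(3) and (8)
of the paper): a nonnegative `d`-SOS valuation satisfies
`v(s) ≤ v(s_{−i}, 0_i) + d · v(0_{−i}, s_i)`, splitting the value into an
"OTHER" term and a "SELF" term. -/
theorem self_other_decomposition {n : ℕ} (d : ℝ) (hd : 1 ≤ d)
    (v : (Fin n → ℝ) → ℝ) (hv : dSOS d v)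
    (hpos : ∀ t : Fin n → ℝ, (∀ l, 0 ≤ t l) → 0 ≤ v t)
    (s : Fin n → ℝ) (hs : ∀ l, 0 ≤ s l) (i : Fin n) :
    v s ≤ v (Function.update s i 0) + d * v (fun j => if j = i then s i else 0) := by
  have h := hv i 0 (s i) le_rfl (hs i) s (fun _ => 0) (fun l => le_rfl) hs
  have e1 : Function.update s i (0 + s i) = s := by
    funext j
    rcases eq_or_ne j i with rfl | hj
    · simp
    · simp [Function.update_of_ne hj]
  have e2 : Function.update (fun _ : Fin n => (0:ℝ)) i (0 + s i) =
      (fun j => if j = i then s i else 0) := by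
    funext j
    rcases eq_or_ne j i with rfl | hj
    · simp
    · simp [Function.update_of_ne hj, hj]
  rw [e1, e2] at h
  have h0 : 0 ≤ v (Function.update (fun _ : Fin n => (0:ℝ)) i 0) :=
    hpos _ (by
      intro l
      rcases eq_or_ne l i with rfl | hl
      · simp
      · simp [Function.update_of_ne hl])
  nlinarith [h, h0, hd]
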